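/- Let {E_i}_{i=1}^n be a POVM with measurement operators A_i (E_i = A_i†A_i), p_i(ρ) = Tr[E_i ρ], and ρ_i = A_i ρ A_i†/p_i when p_i > 0. Then the relative entropy of POVM-based coherence satisfies C_rel(ρ, E) = S(Σ_i A_i ρ A_i† ⊗ |i⟩⟨i|) − S(ρ) = H({p_i(ρ)}) + Σ_i p_i(ρ) S(ρ_i) − S(ρ), where H is the Shannon entropy. -/

import Mathlib

open Matrix Kronecker Complex ComplexOrder

/-- Von Neumann entropy of a (Hermitian) matrix: S(ρ) = −Σ λ_i log λ_i over the
eigenvalues of ρ. -/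
noncomputable def vN {ι : Type*} [Fintype ι] [DecidableEq ι]
    (ρ : Matrix ι ι ℂ) : ℝ :=
  if h : ρ.IsHermitian then ∑ i, Real.negMulLog (h.eigenvalues i) else 0


open Polynomial
open scoped ComplexOrder

variable {ι κ : Type*} [Fintype ι] [DecidableEq ι] [Fintype κ] [DecidableEq κ]

lemma myCharpoly_diagonal (v : ι → ℂ) :
    (Matrix.diagonal v).charpoly = ∏ i, (X - C (v i)) := by
  have h : (Matrix.diagonal v).charmatrix = Matrix.diagonal (fun i => X - C (v i)) := by
    ext i j
    by_cases hij : i = j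
    · subst hij; simp
    · simp [charmatrix_apply_ne _ _ _ hij, Matrix.diagonal_apply_ne _ hij,
        Matrix.diagonal_apply_ne _ hij]
  rw [Matrix.charpoly, h, Matrix.det_diagonal]

lemma myCharpoly_conj {U M : Matrix ι ι ℂ} (hU : Uᴴ * U = 1) :
    (Uᴴ * M * U).charpoly = M.charpoly := by
  have hU' : U * Uᴴ = 1 := mul_eq_one_comm.mp hU
  have key : charmatrix (Uᴴ * M * U) =
      Uᴴ.map C * charmatrix M * U.map C := by
    have h1 : (Uᴴ.map C) * (Matrix.scalar ι (X : ℂ[X])) * (U.map C)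
        = Matrix.scalar ι (X : ℂ[X]) := by
      rw [Matrix.scalar_apply, ← Matrix.smul_one_eq_diagonal, Matrix.mul_smul,
        Matrix.smul_mul, mul_one, ← Matrix.map_mul, hU, Matrix.map_one _ (map_zero C) (map_one C),
        Matrix.smul_one_eq_diagonal]
    rw [charmatrix, charmatrix]
    rw [Matrix.mul_sub, Matrix.sub_mul, h1]
    congr 1
    simp only [RingHom.mapMatrix_apply, Matrix.map_mul]
  rw [Matrix.charpoly, Matrix.charpoly, key, Matrix.det_mul, Matrix.det_mul]
  rw [mul_comm, ← mul_assoc, ← Matrix.det_mul, ← Matrix.map_mul, hU',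
    Matrix.map_one _ (map_zero C) (map_one C), Matrix.det_one, one_mul]

lemma myCharpoly_blockDiagonal (B : κ → Matrix ι ι ℂ) :
    (Matrix.blockDiagonal B).charpoly = ∏ k, (B k).charpoly := by
  have h : charmatrix (Matrix.blockDiagonal B)
      = Matrix.blockDiagonal (fun k => charmatrix (B k)) := by
    ext ⟨i, k⟩ ⟨j, l⟩
    by_cases hkl : k = l
    · subst hkl
      by_cases hij : i = j
      · subst hij; simp [Matrix.blockDiagonal_apply]
      · simp [charmatrix_apply_ne _ _ _ (by simp [hij] : (i,k) ≠ (j,k)),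
          Matrix.blockDiagonal_apply, charmatrix_apply_ne _ _ _ hij]
    · simp [charmatrix_apply_ne _ _ _ (by simp [hkl] : (i,k) ≠ (j,l)),
        Matrix.blockDiagonal_apply, hkl]
  rw [Matrix.charpoly, h, Matrix.det_blockDiagonal]
  rfl

lemma myCharpoly_conj' {U M : Matrix ι ι ℂ} (hU : U * Uᴴ = 1) :
    (U * M * Uᴴ).charpoly = M.charpoly := by
  have h : (Uᴴ)ᴴ * (Uᴴ) = 1 := by rw [Matrix.conjTranspose_conjTranspose]; exact hU
  have h2 := myCharpoly_conj (M := M) h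
  rwa [Matrix.conjTranspose_conjTranspose] at h2

lemma myCharpoly_hermitian {M : Matrix ι ι ℂ} (hM : M.IsHermitian) :
    M.charpoly = ∏ i, (X - C ((hM.eigenvalues i : ℝ) : ℂ)) := by
  have hsp := hM.spectral_theorem
  set U : Matrix ι ι ℂ := (hM.eigenvectorUnitary : Matrix ι ι ℂ)
  have hU : U * Uᴴ = 1 := by
    simpa [U, Matrix.star_eq_conjTranspose] using
      (Matrix.mem_unitaryGroup_iff.mp hM.eigenvectorUnitary.2)
  have hM' : M = U * Matrix.diagonal (RCLike.ofReal ∘ hM.eigenvalues) * Uᴴ := by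
    simpa [Matrix.star_eq_conjTranspose] using hsp
  rw [congrArg Matrix.charpoly hM', myCharpoly_conj' hU, myCharpoly_diagonal]
  rfl

lemma myRoots_charpoly {M : Matrix ι ι ℂ} (hM : M.IsHermitian) :
    M.charpoly.roots = Finset.univ.val.map (fun i => ((hM.eigenvalues i : ℝ) : ℂ)) := by
  rw [myCharpoly_hermitian hM]
  rw [Finset.prod_eq_multiset_prod]
  rw [show Finset.univ.val.map (fun i => X - C ((hM.eigenvalues i : ℝ) : ℂ))
      = (Finset.univ.val.map (fun i => ((hM.eigenvalues i : ℝ) : ℂ))).map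
          (fun a => X - C a) by rw [Multiset.map_map]; rfl]
  exact Polynomial.roots_multiset_prod_X_sub_C _

/-- entropy functional on polynomials -/
noncomputable def entF (q : Polynomial ℂ) : ℝ :=
  (q.roots.map (fun z => Real.negMulLog z.re)).sum

lemma vN_eq_entF {M : Matrix ι ι ℂ} (hM : M.IsHermitian) :
    vN M = entF M.charpoly := by
  rw [vN, dif_pos hM, entF, myRoots_charpoly hM, Multiset.map_map]
  rw [Finset.sum_eq_multiset_sum]
  congr 1

lemma entF_mul {p q : Polynomial ℂ} (hp : p ≠ 0) (hq : q ≠ 0) :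
    entF (p * q) = entF p + entF q := by
  rw [entF, Polynomial.roots_mul (mul_ne_zero hp hq), Multiset.map_add, Multiset.sum_add]
  rfl

omit [Fintype κ] in
lemma entF_prod {s : Finset κ} {f : κ → Polynomial ℂ} (hf : ∀ k ∈ s, f k ≠ 0) :
    entF (∏ k ∈ s, f k) = ∑ k ∈ s, entF (f k) := by
  classical
  induction s using Finset.induction with
  | empty => simp [entF]
  | @insert a s' hk ih =>
    rw [Finset.prod_insert hk, Finset.sum_insert hk,
      entF_mul (hf a (Finset.mem_insert_self a s'))
        (Finset.prod_ne_zero_iff.mpr fun k hks => hf k (Finset.mem_insert_of_mem hks)),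
      ih fun k hks => hf k (Finset.mem_insert_of_mem hks)]

lemma entF_charpoly_zero : entF ((0 : Matrix ι ι ℂ)).charpoly = 0 := by
  have h : ((0 : Matrix ι ι ℂ)).charpoly = X ^ Fintype.card ι := by
    rw [← Matrix.diagonal_zero, myCharpoly_diagonal]
    simp [Finset.card_univ]
  rw [entF, h, Polynomial.roots_X_pow]
  simp [Multiset.map_nsmul, Multiset.sum_nsmul]

lemma sum_eigenvalues_eq_trace {M : Matrix ι ι ℂ} (hM : M.IsHermitian) :
    ∑ i, hM.eigenvalues i = M.trace.re := by
  have h := Matrix.trace_eq_sum_roots_charpoly M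
  rw [myRoots_charpoly hM, ← Finset.sum_eq_multiset_sum] at h
  have : M.trace = ((∑ i, hM.eigenvalues i : ℝ) : ℂ) := by push_cast [h]; rfl
  rw [this]; simp

lemma isHermitian_real_smul {M : Matrix ι ι ℂ} (hM : M.IsHermitian) (c : ℂ) (hc : star c = c) :
    (c • M).IsHermitian := by
  unfold Matrix.IsHermitian at *
  rw [Matrix.conjTranspose_smul, hM, hc]

lemma trace_real {M : Matrix ι ι ℂ} (hM : M.IsHermitian) :
    M.trace = ((M.trace.re : ℝ) : ℂ) := by
  have h : star M.trace = M.trace := by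
    rw [← Matrix.trace_conjTranspose, hM.eq]
  exact (Complex.conj_eq_iff_re.mp h).symm

lemma myRoots_smul {M : Matrix ι ι ℂ} (hM : M.IsHermitian) (r : ℝ) :
    ((r : ℂ) • M).charpoly.roots
      = Finset.univ.val.map (fun i => ((r * hM.eigenvalues i : ℝ) : ℂ)) := by
  have hsp := hM.spectral_theorem
  set U : Matrix ι ι ℂ := (hM.eigenvectorUnitary : Matrix ι ι ℂ)
  have hU : U * Uᴴ = 1 := by
    simpa [U, Matrix.star_eq_conjTranspose] using
      (Matrix.mem_unitaryGroup_iff.mp hM.eigenvectorUnitary.2)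
  have hd : (r : ℂ) • Matrix.diagonal (RCLike.ofReal ∘ hM.eigenvalues)
      = Matrix.diagonal (fun i => ((r * hM.eigenvalues i : ℝ) : ℂ)) := by
    rw [← Matrix.diagonal_smul]
    refine congrArg Matrix.diagonal (funext fun i => ?_)
    show (r : ℂ) * ((hM.eigenvalues i : ℝ) : ℂ) = ((r * hM.eigenvalues i : ℝ) : ℂ)
    push_cast
    ring
  have key : (r : ℂ) • M
      = U * Matrix.diagonal (fun i => ((r * hM.eigenvalues i : ℝ) : ℂ)) * Uᴴ := by
    rw [← hd, mul_smul_comm, smul_mul_assoc]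
    exact congrArg (fun Y => (r : ℂ) • Y) hsp
  rw [congrArg Matrix.charpoly key, myCharpoly_conj' hU, myCharpoly_diagonal]
  rw [Finset.prod_eq_multiset_prod]
  rw [show Finset.univ.val.map (fun i => X - C ((r * hM.eigenvalues i : ℝ) : ℂ))
      = (Finset.univ.val.map (fun i => ((r * hM.eigenvalues i : ℝ) : ℂ))).map
          (fun a => X - C a) by rw [Multiset.map_map]; rfl]
  exact Polynomial.roots_multiset_prod_X_sub_C _

lemma vN_smul {M : Matrix ι ι ℂ} (hM : M.IsHermitian) (r : ℝ) :
    vN ((r : ℂ) • M) = r * vN M + Real.negMulLog r * M.trace.re := by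
  have hsm : ((r : ℂ) • M).IsHermitian :=
    isHermitian_real_smul hM _ (by simp)
  rw [vN_eq_entF hsm, entF, myRoots_smul hM r, Multiset.map_map,
    ← Finset.sum_eq_multiset_sum]
  rw [vN, dif_pos hM, ← sum_eigenvalues_eq_trace hM, Finset.mul_sum, Finset.mul_sum,
    ← Finset.sum_add_distrib]
  apply Finset.sum_congr rfl
  intro i _
  show Real.negMulLog (r * hM.eigenvalues i) = _
  rw [Real.negMulLog_mul]
  ring

lemma block_entropy {B : Matrix ι ι ℂ} (hB : B.PosSemidef) (p : ℝ) (hp : p = B.trace.re)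
    (ρi : Matrix ι ι ℂ) (hρi : ρi = ((p : ℂ))⁻¹ • B) :
    vN B = Real.negMulLog p + p * vN ρi := by
  by_cases hp0 : p = 0
  · have hz : ∀ i ∈ Finset.univ, hB.1.eigenvalues i = 0 := by
      rw [← Finset.sum_eq_zero_iff_of_nonneg (fun i _ => hB.eigenvalues_nonneg i)]
      rw [sum_eigenvalues_eq_trace hB.1, ← hp, hp0]
    rw [vN, dif_pos hB.1, hp0]
    simp only [Real.negMulLog_zero, zero_mul, add_zero]
    exact Finset.sum_eq_zero fun i hi => by rw [hz i hi, Real.negMulLog_zero]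
  · have hpC : (p : ℂ) ≠ 0 := by exact_mod_cast hp0
    have hBe : B = (p : ℂ) • ρi := by
      rw [hρi, smul_smul, mul_inv_cancel₀ hpC, one_smul]
    have hρiH : ρi.IsHermitian := by
      rw [hρi]
      exact isHermitian_real_smul hB.1 _ (by
        rw [show ((p : ℂ))⁻¹ = ((p⁻¹ : ℝ) : ℂ) by push_cast; ring]
        simp)
    have htr : ρi.trace.re = 1 := by
      rw [hρi, Matrix.trace_smul, trace_real hB.1, ← hp]
      rw [show ((p : ℂ))⁻¹ • ((p : ℝ) : ℂ) = ((p : ℂ))⁻¹ * (p : ℂ) from rfl,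
        inv_mul_cancel₀ hpC]
      simp
    rw [congrArg vN hBe, vN_smul hρiH p, htr]
    ring

open Kronecker in
omit [Fintype ι] in
lemma kron_std_blockDiagonal (B : κ → Matrix ι ι ℂ) :
    ∑ k, (B k) ⊗ₖ Matrix.single k k (1 : ℂ) = Matrix.blockDiagonal B := by
  ext ⟨i, k⟩ ⟨j, l⟩
  rw [Matrix.sum_apply]
  simp only [Matrix.kroneckerMap_apply, Matrix.single, Matrix.of_apply,
    Matrix.blockDiagonal_apply, mul_ite, mul_one, mul_zero]
  by_cases hkl : k = l
  · subst hkl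
    rw [Finset.sum_eq_single k (fun b _ hb => by simp [hb]) (by simp)]
    simp
  · rw [Finset.sum_eq_zero fun b _ => ?_]
    · simp [hkl]
    · by_cases hbk : b = k
      · subst hbk; simp [hkl]
      · simp [fun h : b = k => hbk h, hbk]

open Kronecker in
omit [Fintype ι] in
lemma kron_std_single (ρ : Matrix ι ι ℂ) (z : κ) :
    ρ ⊗ₖ Matrix.single z z (1 : ℂ)
      = Matrix.blockDiagonal (fun k => if k = z then ρ else 0) := by
  ext ⟨i, k⟩ ⟨j, l⟩
  simp only [Matrix.kroneckerMap_apply, Matrix.single, Matrix.of_apply,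
    Matrix.blockDiagonal_apply, mul_ite, mul_one, mul_zero]
  by_cases hkl : k = l <;> by_cases hkz : k = z <;> by_cases hlz : l = z <;>
    simp_all [Matrix.zero_apply] <;> (intro h; exact absurd h.symm (by simp_all))

omit [Fintype ι] [DecidableEq ι] in
lemma std_conj (k i j : κ) :
    Matrix.single k k (1 : ℂ) * Matrix.single i j 1
        * Matrix.single k k 1
      = if i = k ∧ j = k then Matrix.single k k 1 else 0 := by
  by_cases hik : i = k
  · subst hik
    rw [Matrix.single_mul_single_same]
    by_cases hjk : j = i
    · subst hjk
      rw [Matrix.single_mul_single_same]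
      simp
    · rw [Matrix.single_mul_single_of_ne (h := hjk)]
      simp [hjk]
  · rw [Matrix.single_mul_single_of_ne (h := fun h => hik h.symm), Matrix.zero_mul]
    simp [hik]

open Kronecker in
lemma conj_sum (B : κ → κ → Matrix ι ι ℂ) (k : κ) :
    ((1 : Matrix ι ι ℂ) ⊗ₖ Matrix.single k k (1 : ℂ))
        * (∑ i, ∑ j, (B i j) ⊗ₖ Matrix.single i j (1 : ℂ))
        * ((1 : Matrix ι ι ℂ) ⊗ₖ Matrix.single k k (1 : ℂ))
      = (B k k) ⊗ₖ Matrix.single k k (1 : ℂ) := by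
  have hterm : ∀ i j : κ,
      ((1 : Matrix ι ι ℂ) ⊗ₖ Matrix.single k k (1 : ℂ))
          * ((B i j) ⊗ₖ Matrix.single i j 1)
          * ((1 : Matrix ι ι ℂ) ⊗ₖ Matrix.single k k 1)
        = if i = k ∧ j = k then (B i j) ⊗ₖ Matrix.single k k 1 else 0 := by
    intro i j
    rw [← Matrix.mul_kronecker_mul, ← Matrix.mul_kronecker_mul, Matrix.one_mul, Matrix.mul_one,
      std_conj]
    by_cases h : i = k ∧ j = k
    · rw [if_pos h, if_pos h]
    · rw [if_neg h, if_neg h, Matrix.kronecker_zero]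
  simp only [Finset.mul_sum, Finset.sum_mul]
  rw [Finset.sum_congr rfl fun i (_ : i ∈ Finset.univ) =>
    Finset.sum_congr rfl fun j (_ : j ∈ Finset.univ) => hterm i j]
  simp [ite_and, Finset.sum_ite_eq, Finset.sum_ite_eq']


/-- For a POVM {E_i} with measurement operators A_i, the relative
entropy of POVM-based coherence — defined as S(Δ[ρ⊗|1⟩⟨1|]) − S(ρ⊗|1⟩⟨1|) via the
canonical Naimark extension P_i = V†(1⊗|i⟩⟨i|)V — satisfies
C_rel(ρ,E) = S(Σ_i A_i ρ A_i† ⊗ |i⟩⟨i|) − S(ρ)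
           = H({p_i}) + Σ_i p_i S(ρ_i) − S(ρ). -/
theorem povm_relEnt_coherence_formula (d n : ℕ) [NeZero n]
    (E A : Fin n → Matrix (Fin d) (Fin d) ℂ)
    (hE : ∀ i, E i = (A i)ᴴ * A i)
    (hsum : ∑ i, E i = 1)
    (V : Matrix (Fin d × Fin n) (Fin d × Fin n) ℂ)
    (hV : Vᴴ * V = 1)
    (hact : ∀ X : Matrix (Fin d) (Fin d) ℂ,
      V * (X ⊗ₖ Matrix.single (0 : Fin n) (0 : Fin n) (1 : ℂ)) * Vᴴ =
        ∑ i, ∑ j, (A i * X * (A j)ᴴ) ⊗ₖ Matrix.single i j (1 : ℂ))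
    (P : Fin n → Matrix (Fin d × Fin n) (Fin d × Fin n) ℂ)
    (hP : ∀ i, P i = Vᴴ * ((1 : Matrix (Fin d) (Fin d) ℂ) ⊗ₖ
      Matrix.single i i (1 : ℂ)) * V)
    (ρ : Matrix (Fin d) (Fin d) ℂ) (hρ : ρ.PosSemidef) (htr : ρ.trace = 1)
    (p : Fin n → ℝ) (hp : ∀ i, p i = (Matrix.trace (E i * ρ)).re)
    (ρi : Fin n → Matrix (Fin d) (Fin d) ℂ)
    (hρi : ∀ i, ρi i = ((p i : ℂ))⁻¹ • (A i * ρ * (A i)ᴴ)) :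
    vN (∑ k, P k * (ρ ⊗ₖ Matrix.single (0 : Fin n) (0 : Fin n) (1 : ℂ)) * P k)
        - vN (ρ ⊗ₖ Matrix.single (0 : Fin n) (0 : Fin n) (1 : ℂ)) =
      vN (∑ i, (A i * ρ * (A i)ᴴ) ⊗ₖ Matrix.single i i (1 : ℂ)) - vN ρ ∧
    vN (∑ i, (A i * ρ * (A i)ᴴ) ⊗ₖ Matrix.single i i (1 : ℂ)) - vN ρ =
      (∑ i, Real.negMulLog (p i)) + (∑ i, p i * vN (ρi i)) - vN ρ := by
  classical
  have hρH : ρ.IsHermitian := hρ.1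
  have hBpsd : ∀ i, (A i * ρ * (A i)ᴴ).PosSemidef :=
    fun i => hρ.mul_mul_conjTranspose_same (A i)
  have hBH : ∀ i, (A i * ρ * (A i)ᴴ).IsHermitian := fun i => (hBpsd i).1
  have hDeq : (∑ i, (A i * ρ * (A i)ᴴ) ⊗ₖ Matrix.single i i (1 : ℂ))
      = Matrix.blockDiagonal (fun i => A i * ρ * (A i)ᴴ) := kron_std_blockDiagonal _
  have hσeq : ρ ⊗ₖ Matrix.single (0 : Fin n) (0 : Fin n) (1 : ℂ)
      = Matrix.blockDiagonal (fun k : Fin n => if k = 0 then ρ else 0) :=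
    kron_std_single ρ 0
  have hPsum : (∑ k, P k * (ρ ⊗ₖ Matrix.single (0 : Fin n) (0 : Fin n) (1 : ℂ)) * P k)
      = Vᴴ * Matrix.blockDiagonal (fun i => A i * ρ * (A i)ᴴ) * V := by
    have hstep : ∀ k, P k * (ρ ⊗ₖ Matrix.single (0 : Fin n) (0 : Fin n) (1 : ℂ)) * P k
        = Vᴴ * ((A k * ρ * (A k)ᴴ) ⊗ₖ Matrix.single k k (1 : ℂ)) * V := by
      intro k
      have e1 : P k * (ρ ⊗ₖ Matrix.single (0 : Fin n) (0 : Fin n) (1 : ℂ)) * P k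
          = Vᴴ * (((1 : Matrix (Fin d) (Fin d) ℂ) ⊗ₖ Matrix.single k k (1 : ℂ))
              * (V * (ρ ⊗ₖ Matrix.single (0 : Fin n) (0 : Fin n) (1 : ℂ)) * Vᴴ)
              * ((1 : Matrix (Fin d) (Fin d) ℂ) ⊗ₖ Matrix.single k k (1 : ℂ))) * V := by
        rw [hP k]
        simp only [Matrix.mul_assoc]
      rw [e1, hact ρ, conj_sum (fun i j => A i * ρ * (A j)ᴴ) k]
    rw [Finset.sum_congr rfl fun k _ => hstep k, ← Finset.sum_mul, ← Finset.mul_sum, hDeq]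
  have hDH : (Matrix.blockDiagonal (fun i => A i * ρ * (A i)ᴴ)).IsHermitian := by
    show _ᴴ = _
    rw [Matrix.blockDiagonal_conjTranspose]
    exact congrArg _ (funext fun k => (hBH k).eq)
  have hGH : ∀ k : Fin n, (if k = 0 then ρ else (0 : Matrix (Fin d) (Fin d) ℂ)).IsHermitian := by
    intro k
    by_cases h : k = 0
    · rw [if_pos h]; exact hρH
    · rw [if_neg h]; exact Matrix.isHermitian_zero
  have hσH : (ρ ⊗ₖ Matrix.single (0 : Fin n) (0 : Fin n) (1 : ℂ)).IsHermitian := by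
    rw [hσeq]
    show _ᴴ = _
    rw [Matrix.blockDiagonal_conjTranspose]
    exact congrArg _ (funext fun k => (hGH k).eq)
  have hVDVH : (Vᴴ * Matrix.blockDiagonal (fun i => A i * ρ * (A i)ᴴ) * V).IsHermitian := by
    show _ᴴ = _
    rw [Matrix.conjTranspose_mul, Matrix.conjTranspose_mul,
      Matrix.conjTranspose_conjTranspose, hDH.eq, Matrix.mul_assoc]
  have hvN1 : vN (Vᴴ * Matrix.blockDiagonal (fun i => A i * ρ * (A i)ᴴ) * V)
      = vN (Matrix.blockDiagonal (fun i => A i * ρ * (A i)ᴴ)) := by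
    rw [vN_eq_entF hVDVH, myCharpoly_conj hV, ← vN_eq_entF hDH]
  have hvNσ : vN (ρ ⊗ₖ Matrix.single (0 : Fin n) (0 : Fin n) (1 : ℂ)) = vN ρ := by
    rw [vN_eq_entF hσH, congrArg Matrix.charpoly hσeq, myCharpoly_blockDiagonal,
      entF_prod (fun k _ => (Matrix.charpoly_monic _).ne_zero)]
    have he : ∀ k : Fin n,
        entF (Matrix.charpoly (if k = 0 then ρ else (0 : Matrix (Fin d) (Fin d) ℂ)))
          = if k = 0 then entF ρ.charpoly else 0 := by
      intro k
      by_cases h : k = 0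
      · rw [if_pos h, if_pos h]
      · rw [if_neg h, if_neg h]; exact entF_charpoly_zero
    rw [Finset.sum_congr rfl fun k _ => he k, Finset.sum_ite_eq' Finset.univ (0 : Fin n),
      if_pos (Finset.mem_univ _), vN_eq_entF hρH]
  have hpk : ∀ k, p k = ((A k * ρ * (A k)ᴴ).trace).re := by
    intro k
    rw [hp k, hE k]
    congr 1
    rw [Matrix.mul_assoc, Matrix.trace_mul_comm]
  have hblock : ∀ k, vN (A k * ρ * (A k)ᴴ) = Real.negMulLog (p k) + p k * vN (ρi k) :=
    fun k => block_entropy (hBpsd k) (p k) (hpk k) (ρi k) (hρi k)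
  have hvND : vN (Matrix.blockDiagonal (fun i => A i * ρ * (A i)ᴴ))
      = ∑ k, vN (A k * ρ * (A k)ᴴ) := by
    rw [vN_eq_entF hDH, myCharpoly_blockDiagonal,
      entF_prod (fun k _ => (Matrix.charpoly_monic _).ne_zero)]
    exact Finset.sum_congr rfl fun k _ => (vN_eq_entF (hBH k)).symm
  constructor
  · rw [hPsum, hvN1, hvNσ, hDeq]
  · rw [hDeq, hvND, Finset.sum_congr rfl fun k _ => hblock k, Finset.sum_add_distrib]
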